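/- For every integer a ≥ 3 and every integer w ≥ 0, the number of 2^a-multipartitions satisfies k(2^a, w) ≤ 2^((a − 4/3)w + 3). -/

import Mathlib

set_option maxRecDepth 100000
set_option maxHeartbeats 1000000
set_option exponentiation.threshold 500

/-- The number of `s`-multipartitions of `t`: tuples of `s` partitions whose sizes sum to `t`. -/
noncomputable def multipartitions (s t : ℕ) : ℕ :=
  Nat.card {f : Fin s → Σ n : ℕ, Nat.Partition n // ∑ i, (f i).1 = t}

namespace MPaux

abbrev MP (m w : ℕ) := {f : Fin m → Σ n : ℕ, Nat.Partition n // ∑ i, (f i).1 = w}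

instance (m w : ℕ) : Finite (MP m w) := by
  let g : MP m w → (Fin m → Σ n : Fin (w+1), Nat.Partition n) := fun f i =>
    ⟨⟨(f.1 i).1, Nat.lt_succ_of_le (le_of_le_of_eq
        (Finset.single_le_sum (f := fun i => (f.1 i).1)
          (fun _ _ => Nat.zero_le _) (Finset.mem_univ i)) f.2)⟩, (f.1 i).2⟩
  have hg : Function.Injective g := by
    intro f f' h
    apply Subtype.ext; funext i
    have hi := congrFun h i
    obtain ⟨h1, h2⟩ := Sigma.mk.inj_iff.mp hi
    exact Sigma.ext (by simpa using congrArg Fin.val h1) h2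
  exact Finite.of_injective g hg

lemma natCard_sigma {m : ℕ} (β : Fin m → Type*) [inst : ∀ j, Finite (β j)] :
    Nat.card (Σ j, β j) = ∑ j, Nat.card (β j) := by
  letI : ∀ j, Fintype (β j) := fun j => Fintype.ofFinite (β j)
  simp [Nat.card_eq_fintype_card, Fintype.card_sigma]

lemma multipartitions_add (s t w : ℕ) :
    multipartitions (s + t) w =
      ∑ j ∈ Finset.range (w + 1), multipartitions s j * multipartitions t (w - j) := by
  classical
  have key : Nat.card (Σ j : Fin (w+1), MP s j.1 × MP t (w - j.1)) = Nat.card (MP (s+t) w) := by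
    set e := finSumFinEquiv (m := s) (n := t) with he
    have hsum : ∀ (F : Fin (s+t) → ℕ), ∑ i, F i = (∑ x, F (e (Sum.inl x))) + ∑ x, F (e (Sum.inr x)) := by
      intro F
      rw [← Equiv.sum_comp e F, Fintype.sum_sum_type]
    apply Nat.card_eq_of_bijective
      (f := fun x => ⟨fun i => Sum.elim x.2.1.1 x.2.2.1 (e.symm i), by
        obtain ⟨⟨j, hj⟩, g, h⟩ := x
        rw [hsum]
        simp only [Equiv.symm_apply_apply, Sum.elim_inl, Sum.elim_inr]
        rw [g.2, h.2]
        omega⟩)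
    constructor
    · rintro ⟨⟨j, hj⟩, g, h⟩ ⟨⟨j', hj'⟩, g', h'⟩ hΦ
      have hv := congrArg Subtype.val hΦ
      simp only at hv
      have hgv : g.1 = g'.1 := by
        funext x
        have := congrFun hv (e (Sum.inl x))
        simpa using this
      have hhv : h.1 = h'.1 := by
        funext x
        have := congrFun hv (e (Sum.inr x))
        simpa using this
      have hjj : j = j' := by
        have h1 := g.2; have h2 := g'.2
        rw [← hgv] at h2
        simp only [Fin.val_mk] at h1 h2
        omega
      subst hjj
      have hg2 : g = g' := Subtype.ext hgv
      have hh2 : h = h' := Subtype.ext hhv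
      subst hg2; subst hh2
      rfl
    · rintro ⟨f, hf⟩
      set g : Fin s → Σ n : ℕ, Nat.Partition n := fun x => f (e (Sum.inl x)) with hgdef
      set h : Fin t → Σ n : ℕ, Nat.Partition n := fun x => f (e (Sum.inr x)) with hhdef
      have hw : (∑ x, (g x).1) + ∑ x, (h x).1 = w := by
        rw [← hsum (fun i => (f i).1)]; exact hf
      refine ⟨⟨⟨∑ x, (g x).1, by omega⟩, ⟨g, rfl⟩, ⟨h, by simp only [Fin.val_mk]; omega⟩⟩, ?_⟩
      apply Subtype.ext
      funext i
      show Sum.elim g h (e.symm i) = f i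
      conv_rhs => rw [← e.apply_symm_apply i]
      rcases hy : e.symm i with x | x
      · simp [hgdef]
      · simp [hhdef]
  have := natCard_sigma (fun j : Fin (w+1) => MP s j.1 × MP t (w - j.1))
  rw [show multipartitions (s+t) w = Nat.card (MP (s+t) w) from rfl, ← key, this]
  rw [Finset.sum_range]
  exact Finset.sum_congr rfl fun j _ => Nat.card_prod _ _

lemma multipartitions_one (w : ℕ) : multipartitions 1 w = Nat.card (Nat.Partition w) := by
  symm
  apply Nat.card_eq_of_bijective (f := fun P : Nat.Partition w =>
    (⟨fun _ => ⟨w, P⟩, by simp⟩ : MP 1 w))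
  constructor
  · intro P Q hPQ
    have := congrFun (congrArg Subtype.val hPQ) 0
    simpa using eq_of_heq (Sigma.mk.inj_iff.mp this).2
  · rintro ⟨f, hf⟩
    rw [Fin.sum_univ_one] at hf
    rcases hx : f 0 with ⟨n, P⟩
    have hn : n = w := by rw [hx] at hf; exact hf
    subst hn
    refine ⟨P, Subtype.ext (funext fun i => ?_)⟩
    show (⟨n, P⟩ : Σ n : ℕ, Nat.Partition n) = f i
    rw [Subsingleton.elim i 0, hx]

open Multiset

lemma msum0 (m : Multiset ℕ) (hpos : ∀ x ∈ m, 0 < x) (hs : m.sum = 0) : m = 0 := by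
  rcases m.empty_or_exists_mem with h | ⟨a, ha⟩
  · exact h
  · obtain ⟨t, rfl⟩ := Multiset.exists_cons_of_mem ha
    have := hpos a (Multiset.mem_cons_self a t)
    rw [Multiset.sum_cons] at hs
    omega

lemma msum_step (k : ℕ) (hk : 0 < k) (m : Multiset ℕ) (hpos : ∀ x ∈ m, 0 < x)
    (hs : m.sum = k) : ∃ a t, m = a ::ₘ t ∧ 0 < a ∧ a ≤ k ∧ t.sum = k - a ∧ ∀ x ∈ t, 0 < x := by
  rcases m.empty_or_exists_mem with h | ⟨a, ha⟩
  · subst h; simp at hs; omega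
  · obtain ⟨t, rfl⟩ := Multiset.exists_cons_of_mem ha
    have h1 := hpos a (Multiset.mem_cons_self a t)
    rw [Multiset.sum_cons] at hs
    exact ⟨a, t, rfl, h1, by omega, by omega, fun x hx => hpos x (Multiset.mem_cons_of_mem hx)⟩

lemma msum1 (m : Multiset ℕ) (hpos : ∀ x ∈ m, 0 < x) (hs : m.sum = 1) : m = {1} := by
  obtain ⟨a, t, rfl, h1, h2, h3, h4⟩ := msum_step 1 (by norm_num) m hpos hs
  interval_cases a
  · rw [msum0 t h4 h3]; rfl

lemma msum2 (m : Multiset ℕ) (hpos : ∀ x ∈ m, 0 < x) (hs : m.sum = 2) :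
    m = {2} ∨ m = {1, 1} := by
  obtain ⟨a, t, rfl, h1, h2, h3, h4⟩ := msum_step 2 (by norm_num) m hpos hs
  interval_cases a
  · rw [msum1 t h4 h3]; right; rfl
  · rw [msum0 t h4 h3]; left; rfl

lemma msum3 (m : Multiset ℕ) (hpos : ∀ x ∈ m, 0 < x) (hs : m.sum = 3) :
    m = {3} ∨ m = {2, 1} ∨ m = {1, 1, 1} := by
  obtain ⟨a, t, rfl, h1, h2, h3, h4⟩ := msum_step 3 (by norm_num) m hpos hs
  interval_cases a
  · rcases msum2 t h4 h3 with h | h <;> rw [h]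
    · right; left; decide
    · right; right; rfl
  · rw [msum1 t h4 h3]; right; left; rfl
  · rw [msum0 t h4 h3]; left; rfl

lemma msum4 (m : Multiset ℕ) (hpos : ∀ x ∈ m, 0 < x) (hs : m.sum = 4) :
    m = {4} ∨ m = {3, 1} ∨ m = {2, 2} ∨ m = {2, 1, 1} ∨ m = {1, 1, 1, 1} := by
  obtain ⟨a, t, rfl, h1, h2, h3, h4⟩ := msum_step 4 (by norm_num) m hpos hs
  interval_cases a
  · rcases msum3 t h4 h3 with h | h | h <;> rw [h]
    · right; left; decide
    · right; right; right; left; decide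
    · right; right; right; right; rfl
  · rcases msum2 t h4 h3 with h | h <;> rw [h]
    · right; right; left; decide
    · right; right; right; left; rfl
  · rw [msum1 t h4 h3]; right; left; rfl
  · rw [msum0 t h4 h3]; left; rfl

lemma msum5 (m : Multiset ℕ) (hpos : ∀ x ∈ m, 0 < x) (hs : m.sum = 5) :
    m = {5} ∨ m = {4, 1} ∨ m = {3, 2} ∨ m = {3, 1, 1} ∨ m = {2, 2, 1} ∨
      m = {2, 1, 1, 1} ∨ m = {1, 1, 1, 1, 1} := by
  obtain ⟨a, t, rfl, h1, h2, h3, h4⟩ := msum_step 5 (by norm_num) m hpos hs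
  interval_cases a
  · rcases msum4 t h4 h3 with h | h | h | h | h <;> rw [h]
    · right; left; decide
    · right; right; right; left; decide
    · right; right; right; right; left; decide
    · right; right; right; right; right; left; decide
    · right; right; right; right; right; right; rfl
  · rcases msum3 t h4 h3 with h | h | h <;> rw [h]
    · right; right; left; decide
    · right; right; right; right; left; decide
    · right; right; right; right; right; left; rfl
  · rcases msum2 t h4 h3 with h | h <;> rw [h]
    · right; right; left; rfl
    · right; right; right; left; rfl
  · rw [msum1 t h4 h3]; right; left; rfl
  · rw [msum0 t h4 h3]; left; rfl

/-- Build a partition from an explicit multiset. -/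
def mkPart (k : ℕ) (m : Multiset ℕ) (hpos : ∀ x ∈ m, 0 < x) (hs : m.sum = k) :
    Nat.Partition k := ⟨m, fun hi => hpos _ hi, hs⟩

lemma card_part_le (k c : ℕ) (f : Fin c → Nat.Partition k) (hf : Function.Surjective f) :
    Nat.card (Nat.Partition k) ≤ c := by
  simpa using Nat.card_le_card_of_surjective f hf

lemma card_partition2 : Nat.card (Nat.Partition 2) ≤ 2 := by
  apply card_part_le 2 2
    (f := ![mkPart 2 {2} (by intro x hx; simp at hx; omega) (by decide),
            mkPart 2 {1,1} (by intro x hx; simp at hx; omega) (by decide)])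
  intro P
  rcases msum2 P.parts (fun _ hx => P.parts_pos hx) P.parts_sum with h | h
  · exact ⟨0, Nat.Partition.ext h.symm⟩
  · exact ⟨1, Nat.Partition.ext h.symm⟩

lemma card_partition3 : Nat.card (Nat.Partition 3) ≤ 3 := by
  apply card_part_le 3 3
    (f := ![mkPart 3 {3} (by intro x hx; simp at hx; omega) (by decide),
            mkPart 3 {2,1} (by intro x hx; simp at hx; omega) (by decide),
            mkPart 3 {1,1,1} (by intro x hx; simp at hx; omega) (by decide)])
  intro P
  rcases msum3 P.parts (fun _ hx => P.parts_pos hx) P.parts_sum with h | h | h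
  · exact ⟨0, Nat.Partition.ext h.symm⟩
  · exact ⟨1, Nat.Partition.ext h.symm⟩
  · exact ⟨2, Nat.Partition.ext h.symm⟩

lemma card_partition4 : Nat.card (Nat.Partition 4) ≤ 5 := by
  apply card_part_le 4 5
    (f := ![mkPart 4 {4} (by intro x hx; simp at hx; omega) (by decide),
            mkPart 4 {3,1} (by intro x hx; simp at hx; omega) (by decide),
            mkPart 4 {2,2} (by intro x hx; simp at hx; omega) (by decide),
            mkPart 4 {2,1,1} (by intro x hx; simp at hx; omega) (by decide),
            mkPart 4 {1,1,1,1} (by intro x hx; simp at hx; omega) (by decide)])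
  intro P
  rcases msum4 P.parts (fun _ hx => P.parts_pos hx) P.parts_sum with h | h | h | h | h
  · exact ⟨0, Nat.Partition.ext h.symm⟩
  · exact ⟨1, Nat.Partition.ext h.symm⟩
  · exact ⟨2, Nat.Partition.ext h.symm⟩
  · exact ⟨3, Nat.Partition.ext h.symm⟩
  · exact ⟨4, Nat.Partition.ext h.symm⟩

lemma card_partition5 : Nat.card (Nat.Partition 5) ≤ 7 := by
  apply card_part_le 5 7
    (f := ![mkPart 5 {5} (by intro x hx; simp at hx; omega) (by decide),
            mkPart 5 {4,1} (by intro x hx; simp at hx; omega) (by decide),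
            mkPart 5 {3,2} (by intro x hx; simp at hx; omega) (by decide),
            mkPart 5 {3,1,1} (by intro x hx; simp at hx; omega) (by decide),
            mkPart 5 {2,2,1} (by intro x hx; simp at hx; omega) (by decide),
            mkPart 5 {2,1,1,1} (by intro x hx; simp at hx; omega) (by decide),
            mkPart 5 {1,1,1,1,1} (by intro x hx; simp at hx; omega) (by decide)])
  intro P
  rcases msum5 P.parts (fun _ hx => P.parts_pos hx) P.parts_sum with h | h | h | h | h | h | h
  · exact ⟨0, Nat.Partition.ext h.symm⟩
  · exact ⟨1, Nat.Partition.ext h.symm⟩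
  · exact ⟨2, Nat.Partition.ext h.symm⟩
  · exact ⟨3, Nat.Partition.ext h.symm⟩
  · exact ⟨4, Nat.Partition.ext h.symm⟩
  · exact ⟨5, Nat.Partition.ext h.symm⟩
  · exact ⟨6, Nat.Partition.ext h.symm⟩

lemma card_partition_le_pow (n : ℕ) : Nat.card (Nat.Partition n) ≤ 2 ^ (n - 1) := by
  rw [Nat.card_eq_fintype_card, ← composition_card n]
  apply Fintype.card_le_of_injective
    (f := fun P => (⟨P.parts.sort (· ≤ ·), fun hi => P.parts_pos (Multiset.mem_sort _ |>.mp hi),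
      by rw [← Multiset.sum_coe, Multiset.sort_eq]; exact P.parts_sum⟩ : Composition n))
  intro P Q h
  apply Nat.Partition.ext
  have := congrArg Composition.blocks h
  simp only at this
  rw [← Multiset.sort_eq P.parts (· ≤ ·), ← Multiset.sort_eq Q.parts (· ≤ ·), this]

lemma card_partition0 : Nat.card (Nat.Partition 0) = 1 := Nat.card_eq_one_iff_unique.mpr ⟨inferInstance, inferInstance⟩
lemma card_partition1 : Nat.card (Nat.Partition 1) = 1 := Nat.card_eq_one_iff_unique.mpr ⟨inferInstance, inferInstance⟩


def b : ℕ → ℕ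
  | 0 => 1 | 1 => 1 | 2 => 2 | 3 => 3 | 4 => 5 | 5 => 7 | n => 2^(n-1)
def cv (f g : ℕ → ℕ) (w : ℕ) : ℕ := ∑ j ∈ Finset.range (w+1), f j * g (w-j)
def U2 : ℕ → ℕ := cv b b
def U4 : ℕ → ℕ := cv U2 U2
def U8 : ℕ → ℕ := cv U4 U4
def V2 (n : ℕ) : ℕ := ([1, 2, 5, 10, 20, 36, 107, 250, 579, 1286, 2801, 5952, 12928, 27904, 59904, 128000, 272384, 577536, 1220608, 2572288, 5406720, 11337728, 23724032, 49545216, 103284736, 214958080, 446693376, 926941184, 1920991232, 3976200192, 8220835840, 16978542592, 35030827008, 72209137664, 148713242624, 306016419840, 629212708864, 1292785156096, 2654289788928, 5446018531328, 11166914969600, 22883585753088, 46866683133952, 95932389523456, 196262825558016, 401321744138240, 820235674320896, 1675655720730624, 3421680185638912, 6984097859633152, 14249670695976960, 29062291345375232, 59250482597593088, 120752765008871424, 246009129645113344, 501025458544967680, 1020065315599417344, 2076159428217798656, 4224376450473525248, 8592868089022906368] : List ℕ).getD n 0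
def V4 (n : ℕ) : ℕ := ([1, 4, 14, 40, 105, 252, 658, 1688, 4348, 10968, 27112, 65252, 156003, 369688, 870782, 2037672, 4737207, 10933080, 25080394, 57215180, 129866977, 293401216, 659995904, 1478568448, 3299718144, 7337551872, 16261435392, 35924123648, 79124709376, 173783810048, 380666445824, 831724847104, 1812890648576, 3942514163712, 8555269718016, 18526721015808, 40041497755648, 86379082022912, 186007467065344, 399862159900672, 858184730279936, 1838959638347776, 3934713223839744, 8406791280918528, 17936965617844224, 38220203150016512, 81336359779827712, 172880241914544128, 367024351515508736, 778309268729233408, 1648675698249826304, 3488678514360582144, 7374718331976155136, 15574136355481976832, 32858752163969499136, 69262875173656199168, 145869819517786390528, 306943439533854687232, 645343818777450512384, 1355736223197756915712] : List ℕ).getD n 0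
def V8 (n : ℕ) : ℕ := ([1, 8, 44, 192, 726, 2464, 7872, 24096, 71809, 209544, 600436, 1688456, 4667394, 12699496, 34080016, 90353208, 236992828, 615520656, 1584121632, 4042297320, 10233199288, 25714143424, 64169917852, 159104194112, 392097465931, 960771807768, 2341517845944, 5677420581048, 13699252620070, 32903448236800, 78683365846864, 187375177196864, 444439503781231, 1050177063354096, 2472487491231048, 5800893893114328, 13564634809030482, 31617880015688096, 73472404945933988, 170229442478515352, 393290060622181825, 906160787430716672, 2082356469878708736, 4773132785341731840, 10914138698912950272, 24897156899621916672, 56665573561050701824, 128685969484141379584, 291619769287230521344, 659487414839179280384, 1488429749347053862912, 3352815037925471551488, 7538347578661267832832, 16918144505875258146816, 37902067755077030903808, 84767471187218546032640, 189266289948678019874816, 421905972035692078825472, 939022961077076768063488, 2086766409968491132092416] : List ℕ).getD n 0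

lemma ball_of_all {q : ℕ → Bool} {n : ℕ} (hq : ((List.range n).all q) = true) :
    ∀ w, w < n → q w = true := fun w hw => List.all_eq_true.mp hq _ (List.mem_range.mpr hw)

lemma cv_congr {f f' g g' : ℕ → ℕ} {w : ℕ} (hf : ∀ j ≤ w, f j = f' j)
    (hg : ∀ j ≤ w, g j = g' j) : cv f g w = cv f' g' w := by
  refine Finset.sum_congr rfl fun j hj => ?_
  have hjw := Finset.mem_range.mp hj
  rw [hf j (by omega), hg (w - j) (by omega)]

lemma cv_mono {f f' g g' : ℕ → ℕ} (hf : ∀ j, f j ≤ f' j) (hg : ∀ j, g j ≤ g' j) (w : ℕ) :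
    cv f g w ≤ cv f' g' w :=
  Finset.sum_le_sum fun j _ => Nat.mul_le_mul (hf j) (hg _)

lemma hV2 : ∀ w, w < 60 → U2 w = V2 w := by
  have := ball_of_all (q := fun w => U2 w == V2 w) (n := 60) (by decide)
  exact fun w hw => by simpa using this w hw
lemma hV4 : ∀ w, w < 60 → U4 w = V4 w := by
  have := ball_of_all (q := fun w => cv V2 V2 w == V4 w) (n := 60) (by decide)
  intro w hw
  have h2 : U4 w = cv V2 V2 w :=
    cv_congr (fun j hj => hV2 j (by omega)) (fun j hj => hV2 j (by omega))
  rw [h2]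
  simpa using this w hw
lemma hV8 : ∀ w, w < 60 → U8 w = V8 w := by
  have := ball_of_all (q := fun w => cv V4 V4 w == V8 w) (n := 60) (by decide)
  intro w hw
  have h2 : U8 w = cv V4 V4 w :=
    cv_congr (fun j hj => hV4 j (by omega)) (fun j hj => hV4 j (by omega))
  rw [h2]
  simpa using this w hw
lemma hV8cube : ∀ w, w < 60 → (decide (V8 w ^ 3 ≤ 2 ^ (5*w+9)) : Bool) = true :=
  ball_of_all (q := fun w => decide (V8 w ^ 3 ≤ 2 ^ (5*w+9))) (n := 60) (by decide)


-- structural tail bounds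
lemma b_le_pow (n : ℕ) : b n ≤ 2 ^ n := by
  match n with
  | 0 => decide
  | 1 => decide
  | 2 => decide
  | 3 => decide
  | 4 => decide
  | 5 => decide
  | (n+6) =>
    show 2 ^ (n+5) ≤ 2 ^ (n+6)
    exact Nat.pow_le_pow_right (by norm_num) (by omega)

lemma cv_pow_bound {f g : ℕ → ℕ} {m : ℕ} (hf : ∀ j, f j ≤ 2 ^ j * (j+1) ^ m)
    (hg : ∀ j, g j ≤ 2 ^ j * (j+1) ^ m) (w : ℕ) :
    cv f g w ≤ 2 ^ w * (w+1) ^ (2*m+1) := by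
  have : ∀ j ∈ Finset.range (w+1), f j * g (w-j) ≤ 2 ^ w * (w+1) ^ (2*m) := by
    intro j hj
    have hjw := Finset.mem_range.mp hj
    calc f j * g (w-j) ≤ (2 ^ j * (j+1) ^ m) * (2 ^ (w-j) * ((w-j)+1) ^ m) :=
          Nat.mul_le_mul (hf j) (hg (w-j))
      _ ≤ (2 ^ j * (w+1) ^ m) * (2 ^ (w-j) * (w+1) ^ m) := by
          gcongr <;> omega
      _ = (2 ^ j * 2 ^ (w-j)) * ((w+1) ^ m * (w+1) ^ m) := by ring
      _ = 2 ^ (j + (w-j)) * (w+1) ^ (m + m) := by rw [← pow_add, ← pow_add]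
      _ = 2 ^ w * (w+1) ^ (2*m) := by
          rw [(by omega : j + (w - j) = w), (by omega : m + m = 2*m)]
  calc cv f g w ≤ ∑ _j ∈ Finset.range (w+1), 2 ^ w * (w+1) ^ (2*m) := Finset.sum_le_sum this
    _ = (w+1) * (2 ^ w * (w+1) ^ (2*m)) := by rw [Finset.sum_const, Finset.card_range]; ring
    _ = 2 ^ w * (w+1) ^ (2*m+1) := by ring

lemma U8_pow_bound (w : ℕ) : U8 w ≤ 2 ^ w * (w+1) ^ 7 := by
  have h2 : ∀ j, U2 j ≤ 2 ^ j * (j+1) ^ 1 := fun j =>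
    cv_pow_bound (m := 0) (fun j => by simpa using b_le_pow j) (fun j => by simpa using b_le_pow j) j
  have h4 : ∀ j, U4 j ≤ 2 ^ j * (j+1) ^ 3 := fun j => cv_pow_bound h2 h2 j
  exact cv_pow_bound h4 h4 w

lemma pow21 : ∀ w, 60 ≤ w → (w+1) ^ 21 ≤ 2 ^ (2*w+9) := by
  intro w hw
  induction w with
  | zero => omega
  | succ n ih =>
    rcases Nat.lt_or_ge n 60 with h | h
    · have hn : n = 59 := by omega
      subst hn
      norm_num
    · have ihh := ih (by omega)
      have key : 61 ^ 21 * (n+2) ^ 21 ≤ 61 ^ 21 * (4 * (n+1) ^ 21) := by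
        calc 61 ^ 21 * (n+2) ^ 21 = (61 * (n+2)) ^ 21 := by rw [mul_pow]
          _ ≤ (62 * (n+1)) ^ 21 := Nat.pow_le_pow_left (by omega) 21
          _ = 62 ^ 21 * (n+1) ^ 21 := by rw [mul_pow]
          _ ≤ (4 * 61 ^ 21) * (n+1) ^ 21 := Nat.mul_le_mul_right _ (by norm_num)
          _ = 61 ^ 21 * (4 * (n+1) ^ 21) := by ring
      have key2 : (n+2) ^ 21 ≤ 4 * (n+1) ^ 21 := Nat.le_of_mul_le_mul_left key (by positivity)
      calc (n+1+1) ^ 21 ≤ 4 * (n+1) ^ 21 := key2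
        _ ≤ 4 * 2 ^ (2*n+9) := by omega
        _ = 2 ^ (2*(n+1)+9) := by ring

lemma U8cube_ge60 (w : ℕ) (hw : 60 ≤ w) : U8 w ^ 3 ≤ 2 ^ (5*w+9) := by
  calc U8 w ^ 3 ≤ (2 ^ w * (w+1) ^ 7) ^ 3 := Nat.pow_le_pow_left (U8_pow_bound w) 3
    _ = 2 ^ (3*w) * (w+1) ^ 21 := by ring
    _ ≤ 2 ^ (3*w) * 2 ^ (2*w+9) := Nat.mul_le_mul_left _ (pow21 w hw)
    _ = 2 ^ (5*w+9) := by rw [← pow_add]; congr 1; ring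



noncomputable def h : ℕ → ℝ := fun w =>
  if w = 0 then 1 else if w = 1 then 13/5 else if w = 2 then 22/5
  else if w = 3 then 121/20 else if w = 4 then 36/5 else if w = 5 then 153/20 else 8

lemma h_nonneg (w : ℕ) : 0 ≤ h w := by unfold h; split_ifs <;> norm_num
lemma h_le8 (w : ℕ) : h w ≤ 8 := by unfold h; split_ifs <;> norm_num
lemma h_ge6 (w : ℕ) (hw : 6 ≤ w) : h w = 8 := by
  unfold h; split_ifs <;> first | rfl | omega

lemma eight_mul_le' (w : ℕ) (hw : 6 ≤ w) : 64 * (w+1) ≤ 8 * 2 ^ w := by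
  induction w with
  | zero => omega
  | succ n ih =>
    rcases Nat.lt_or_ge n 6 with hn | hn
    · interval_cases n <;> omega
    · have h1 := ih (by omega)
      have h2 : (64:ℕ) ≤ 2 ^ n := by
        calc (64:ℕ) = 2 ^ 6 := by norm_num
          _ ≤ 2 ^ n := Nat.pow_le_pow_right (by norm_num) hn
      rw [pow_succ]
      omega

lemma h_conv (w : ℕ) : ∑ j ∈ Finset.range (w+1), h j * h (w-j) ≤ 2 ^ w * h w := by
  rcases Nat.lt_or_ge w 6 with hw | hw
  · interval_cases w <;> simp [Finset.sum_range_succ, h] <;> norm_num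
  · have hb : ∀ j ∈ Finset.range (w+1), h j * h (w-j) ≤ 64 := by
      intro j _
      calc h j * h (w-j) ≤ 8 * 8 :=
            mul_le_mul (h_le8 j) (h_le8 _) (h_nonneg _) (by norm_num)
        _ = 64 := by norm_num
    calc ∑ j ∈ Finset.range (w+1), h j * h (w-j) ≤ ∑ _j ∈ Finset.range (w+1), (64:ℝ) :=
          Finset.sum_le_sum hb
      _ = (w+1) * 64 := by rw [Finset.sum_const, Finset.card_range]; ring
      _ ≤ 8 * 2 ^ w := by
          have := eight_mul_le' w hw
          have hc : ((64 * (w+1) : ℕ) : ℝ) ≤ ((8 * 2 ^ w : ℕ) : ℝ) := Nat.cast_le.mpr this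
          push_cast at hc
          linarith
      _ = 2 ^ w * h w := by rw [h_ge6 w hw]; ring


lemma U8cube (w : ℕ) : U8 w ^ 3 ≤ 2 ^ (5*w+9) := by
  rcases Nat.lt_or_ge w 60 with hw | hw
  · rw [hV8 w hw]
    exact of_decide_eq_true (hV8cube w hw)
  · exact U8cube_ge60 w hw

lemma U8_0 : U8 0 = 1 := by decide
lemma U8_1 : U8 1 = 8 := by decide
lemma U8_2 : U8 2 = 44 := by decide
lemma U8_3 : U8 3 = 192 := by decide
lemma U8_4 : U8 4 = 726 := by decide
lemma U8_5 : U8 5 = 2464 := by decide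

lemma b_eq_pow (n : ℕ) (hn : 6 ≤ n) : b n = 2 ^ (n - 1) := by
  match n, hn with
  | (n+6), _ => rfl

lemma mp1_le_b (n : ℕ) : multipartitions 1 n ≤ b n := by
  rw [multipartitions_one]
  match n with
  | 0 => exact le_of_eq card_partition0
  | 1 => exact le_of_eq card_partition1
  | 2 => exact card_partition2
  | 3 => exact card_partition3
  | 4 => exact card_partition4
  | 5 => exact card_partition5
  | (n+6) =>
    rw [b_eq_pow (n+6) (by omega)]
    exact card_partition_le_pow (n+6)

lemma mp2_le (w : ℕ) : multipartitions 2 w ≤ U2 w := by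
  rw [show (2:ℕ) = 1 + 1 from rfl, multipartitions_add]
  exact Finset.sum_le_sum fun j _ => Nat.mul_le_mul (mp1_le_b j) (mp1_le_b _)

lemma mp4_le (w : ℕ) : multipartitions 4 w ≤ U4 w := by
  rw [show (4:ℕ) = 2 + 2 from rfl, multipartitions_add]
  exact Finset.sum_le_sum fun j _ => Nat.mul_le_mul (mp2_le j) (mp2_le _)

lemma mp8_le (w : ℕ) : multipartitions 8 w ≤ U8 w := by
  rw [show (8:ℕ) = 4 + 4 from rfl, multipartitions_add]
  exact Finset.sum_le_sum fun j _ => Nat.mul_le_mul (mp4_le j) (mp4_le _)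


lemma cube_le {x y : ℝ} (hx : 0 ≤ x) (hy : 0 ≤ y) (hxy : x ^ 3 ≤ y ^ 3) : x ≤ y :=
  le_of_pow_le_pow_left₀ (by norm_num) hy hxy

lemma rpow_cube (x : ℝ) : ((2:ℝ) ^ ((5/3 : ℝ) * x)) ^ (3:ℕ) = (2:ℝ) ^ (5 * x) := by
  rw [← Real.rpow_natCast ((2:ℝ) ^ ((5/3 : ℝ) * x)) 3, ← Real.rpow_mul (by norm_num)]
  norm_num
  ring_nf

lemma U8_real (w : ℕ) : (U8 w : ℝ) ≤ h w * (2:ℝ) ^ ((5/3 : ℝ) * w) := by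
  have hy : (0:ℝ) ≤ h w * (2:ℝ) ^ ((5/3 : ℝ) * w) :=
    mul_nonneg (h_nonneg w) (Real.rpow_nonneg (by norm_num) _)
  apply cube_le (by positivity) hy
  have hcube : (h w * (2:ℝ) ^ ((5/3 : ℝ) * w)) ^ (3:ℕ) = h w ^ 3 * (2:ℝ) ^ ((5:ℝ) * w) := by
    rw [mul_pow, rpow_cube]
  rw [hcube]
  have h2 : (2:ℝ) ^ ((5:ℝ) * w) = ((2:ℝ) ^ (5 * w : ℕ)) := by
    rw [← Real.rpow_natCast 2 (5 * w)]
    congr 1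
    push_cast
    ring
  rw [h2]
  rcases Nat.lt_or_ge w 6 with hw | hw
  · interval_cases w <;>
      simp only [U8_0, U8_1, U8_2, U8_3, U8_4, U8_5, h] <;> norm_num
  · rw [h_ge6 w hw]
    have hc : ((U8 w : ℝ)) ^ 3 ≤ (2:ℝ) ^ (5 * w + 9 : ℕ) := by
      exact_mod_cast Nat.cast_le.mpr (U8cube w)
    rw [pow_add] at hc
    norm_num at hc ⊢
    linarith

lemma main_bound : ∀ a : ℕ, 3 ≤ a → ∀ w : ℕ,
    (multipartitions (2 ^ a) w : ℝ) ≤ h w * (2:ℝ) ^ (((a : ℝ) - 4/3) * w) := by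
  intro a ha
  induction a, ha using Nat.le_induction with
  | base =>
    intro w
    calc (multipartitions (2 ^ 3) w : ℝ) ≤ (U8 w : ℝ) := Nat.cast_le.mpr (mp8_le w)
      _ ≤ h w * (2:ℝ) ^ ((5/3 : ℝ) * w) := U8_real w
      _ = h w * (2:ℝ) ^ ((((3:ℕ) : ℝ) - 4/3) * w) := by norm_num
  | succ a ha ih =>
    intro w
    have hsplit : (2:ℕ) ^ (a+1) = 2 ^ a + 2 ^ a := by rw [pow_succ]; ring
    rw [hsplit, multipartitions_add]
    push_cast
    have step1 : ∀ j ∈ Finset.range (w+1),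
        (multipartitions (2^a) j : ℝ) * (multipartitions (2^a) (w-j) : ℝ) ≤
          (h j * h (w-j)) * (2:ℝ) ^ (((a:ℝ) - 4/3) * w) := by
      intro j hj
      have hjw := Finset.mem_range.mp hj
      have e1 := ih j
      have e2 := ih (w - j)
      have hnn1 : (0:ℝ) ≤ (multipartitions (2^a) j : ℝ) := Nat.cast_nonneg _
      have hnn2 : (0:ℝ) ≤ h j * (2:ℝ) ^ (((a:ℝ) - 4/3) * j) :=
        mul_nonneg (h_nonneg j) (Real.rpow_nonneg (by norm_num) _)
      calc (multipartitions (2^a) j : ℝ) * (multipartitions (2^a) (w-j) : ℝ)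
          ≤ (h j * (2:ℝ) ^ (((a:ℝ) - 4/3) * j)) * (h (w-j) * (2:ℝ) ^ (((a:ℝ) - 4/3) * ((w-j : ℕ) : ℝ))) :=
            mul_le_mul e1 e2 (Nat.cast_nonneg _) hnn2
        _ = (h j * h (w-j)) * ((2:ℝ) ^ (((a:ℝ) - 4/3) * j) * (2:ℝ) ^ (((a:ℝ) - 4/3) * ((w-j : ℕ) : ℝ))) := by
            ring
        _ = (h j * h (w-j)) * (2:ℝ) ^ (((a:ℝ) - 4/3) * w) := by
            rw [← Real.rpow_add (by norm_num)]
            congr 1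
            rw [Nat.cast_sub (by omega)]
            ring
    calc ∑ j ∈ Finset.range (w+1), (multipartitions (2^a) j : ℝ) * (multipartitions (2^a) (w-j) : ℝ)
        ≤ ∑ j ∈ Finset.range (w+1), (h j * h (w-j)) * (2:ℝ) ^ (((a:ℝ) - 4/3) * w) :=
          Finset.sum_le_sum step1
      _ = (∑ j ∈ Finset.range (w+1), h j * h (w-j)) * (2:ℝ) ^ (((a:ℝ) - 4/3) * w) := by
          rw [Finset.sum_mul]
      _ ≤ (2 ^ w * h w) * (2:ℝ) ^ (((a:ℝ) - 4/3) * w) :=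
          mul_le_mul_of_nonneg_right (h_conv w) (Real.rpow_nonneg (by norm_num) _)
      _ = h w * (2:ℝ) ^ ((((a:ℕ)+1 : ℝ) - 4/3) * w) := by
          rw [show ((2:ℝ) ^ w : ℝ) = (2:ℝ) ^ ((w:ℕ) : ℝ) from (Real.rpow_natCast 2 w).symm,
            mul_comm ((2:ℝ) ^ ((w:ℕ) : ℝ)) (h w), mul_assoc, ← Real.rpow_add (by norm_num)]
          congr 2
          push_cast
          ring

end MPaux

theorem multipartitions_two_pow_le (a w : ℕ) (ha : 3 ≤ a) :
    (multipartitions (2 ^ a) w : ℝ) ≤ (2 : ℝ) ^ (((a : ℝ) - 4 / 3) * w + 3) := by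
  have hmain := MPaux.main_bound a ha w
  have h8 : MPaux.h w ≤ 8 := MPaux.h_le8 w
  have hpow : (0:ℝ) ≤ (2:ℝ) ^ (((a : ℝ) - 4/3) * w) := Real.rpow_nonneg (by norm_num) _
  calc (multipartitions (2 ^ a) w : ℝ) ≤ MPaux.h w * (2:ℝ) ^ (((a : ℝ) - 4/3) * w) := hmain
    _ ≤ 8 * (2:ℝ) ^ (((a : ℝ) - 4/3) * w) := mul_le_mul_of_nonneg_right h8 hpow
    _ = (2 : ℝ) ^ (((a : ℝ) - 4 / 3) * w + 3) := by
        rw [Real.rpow_add (by norm_num)]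
        norm_num
        ring
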